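/- Let n ≥ 2 be an integer and let κ, λ ∈ ℝ satisfy the ball-condition (κ > 0, or κ = 0 and λ > 0, or κ < 0 and λ > √|κ|). Let φ : ℝ → ℝ be twice differentiable with φ''(s) = −κ·φ(s) for all s, φ(0) = 1, φ'(0) = −λ, and set C_{κ,λ} := inf{t > 0 : φ(t) = 0}. Let S > 0 and let F : (0, S) → ℝ be differentiable with F'(s) ≥ (n−1)κ + F(s)²/(n−1) for all s ∈ (0, S) and liminf_{s→0⁺} F(s) ≥ (n−1)λ. Then S ≤ C_{κ,λ}. -/

import Mathlib

open Set Filter Topology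

lemma riccati_compare {m c : ℝ} {F G : ℝ → ℝ} {s₀ s₁ : ℝ} (h01 : s₀ ≤ s₁)
    (hFd : ∀ s ∈ Set.Icc s₀ s₁, DifferentiableAt ℝ F s)
    (hGd : ∀ s ∈ Set.Icc s₀ s₁, DifferentiableAt ℝ G s)
    (hF' : ∀ s ∈ Set.Icc s₀ s₁, c + (F s) ^ 2 / m ≤ deriv F s)
    (hG' : ∀ s ∈ Set.Icc s₀ s₁, deriv G s = c + (G s) ^ 2 / m)
    (h0 : G s₀ < F s₀) : G s₁ < F s₁ := by
  by_contra hcon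
  push_neg at hcon
  set h : ℝ → ℝ := fun s => F s - G s with hh
  have hhd : ∀ s ∈ Set.Icc s₀ s₁, DifferentiableAt ℝ h s := fun s hs => (hFd s hs).sub (hGd s hs)
  have hhc : ContinuousOn h (Set.Icc s₀ s₁) :=
    fun s hs => (hhd s hs).continuousAt.continuousWithinAt
  set Z : Set ℝ := Set.Icc s₀ s₁ ∩ h ⁻¹' (Set.Iic 0) with hZ
  have hZc : IsClosed Z := hhc.preimage_isClosed_of_isClosed isClosed_Icc isClosed_Iic
  have hZne : Z.Nonempty := ⟨s₁, ⟨h01, le_refl _⟩, by simpa [hh] using hcon⟩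
  have hZbdd : BddBelow Z := ⟨s₀, fun z hz => hz.1.1⟩
  set s₂ := sInf Z with hs₂
  have hs₂Z : s₂ ∈ Z := hZc.csInf_mem hZne hZbdd
  have hs₂mem : s₂ ∈ Set.Icc s₀ s₁ := hs₂Z.1
  have hs₂h : h s₂ ≤ 0 := hs₂Z.2
  have hs02 : s₀ < s₂ := by
    rcases lt_or_eq_of_le hs₂mem.1 with h' | h'
    · exact h'
    · exfalso; rw [← h'] at hs₂h; simp only [hh] at hs₂h; linarith
  have hposh : ∀ s ∈ Set.Ico s₀ s₂, 0 < h s := by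
    intro s hs
    by_contra hns
    push_neg at hns
    have : s ∈ Z := ⟨⟨hs.1, le_trans hs.2.le hs₂mem.2⟩, hns⟩
    exact absurd (csInf_le hZbdd this) (not_le.mpr hs.2)
  obtain ⟨M, hM⟩ := (isCompact_Icc : IsCompact (Set.Icc s₀ s₂)).exists_bound_of_continuousOn
    (f := fun s => (F s + G s) / m) (by
      intro s hs
      have hs' : s ∈ Set.Icc s₀ s₁ := ⟨hs.1, le_trans hs.2 hs₂mem.2⟩
      exact (((hFd s hs').add (hGd s hs')).div_const m).continuousAt.continuousWithinAt)
  set w : ℝ → ℝ := fun s => h s * Real.exp (M * s) with hw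
  have hwd : ∀ s ∈ Set.Icc s₀ s₂,
      HasDerivAt w ((deriv F s - deriv G s) * Real.exp (M*s) + h s * (Real.exp (M*s) * M)) s := by
    intro s hs
    have hs' : s ∈ Set.Icc s₀ s₁ := ⟨hs.1, le_trans hs.2 hs₂mem.2⟩
    have h1 : HasDerivAt h (deriv F s - deriv G s) s :=
      ((hFd s hs').hasDerivAt.sub (hGd s hs').hasDerivAt)
    have h2 : HasDerivAt (fun s => Real.exp (M * s)) (Real.exp (M * s) * M) s := by
      exact ((hasDerivAt_id' s).const_mul M).exp.congr_deriv (by ring)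
    exact h1.mul h2
  have hmono : MonotoneOn w (Set.Icc s₀ s₂) := by
    apply monotoneOn_of_deriv_nonneg (convex_Icc _ _)
    · intro s hs; exact (hwd s hs).continuousAt.continuousWithinAt
    · intro s hs
      rw [interior_Icc] at hs
      exact ((hwd s (Set.mem_Icc_of_Ioo hs)).differentiableAt).differentiableWithinAt
    · intro s hs
      rw [interior_Icc] at hs
      have hsIcc : s ∈ Set.Icc s₀ s₂ := Set.mem_Icc_of_Ioo hs
      rw [(hwd s hsIcc).deriv]
      have hs' : s ∈ Set.Icc s₀ s₁ := ⟨hsIcc.1, le_trans hsIcc.2 hs₂mem.2⟩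
      have hq : -M ≤ (F s + G s)/m := by
        have := hM s hsIcc
        rw [Real.norm_eq_abs] at this
        linarith [abs_le.mp this]
      have hhs : 0 < h s := hposh s ⟨hs.1.le, hs.2⟩
      have hd : deriv F s - deriv G s ≥ h s * ((F s + G s)/m) := by
        have h1 := hF' s hs'
        have h2 := hG' s hs'
        have : h s * ((F s + G s)/m) = (F s)^2/m - (G s)^2/m := by
          simp only [hh]; ring
        rw [this]; rw [h2]; linarith
      have hd2 : h s * ((F s + G s)/m) ≥ h s * (-M) :=
        mul_le_mul_of_nonneg_left hq hhs.le
      have he : 0 < Real.exp (M * s) := Real.exp_pos _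
      have key := mul_le_mul_of_nonneg_right
        (show -(h s * M) ≤ deriv F s - deriv G s by
          have hrw : h s * -M = -(h s * M) := by ring
          rw [hrw] at hd2
          exact le_trans hd2 hd) he.le
      have hre : h s * (Real.exp (M * s) * M) = (h s * M) * Real.exp (M * s) := by ring
      nlinarith
  have h1 : w s₀ ≤ w s₂ := hmono ⟨le_refl _, hs02.le⟩ ⟨hs02.le, le_refl _⟩ hs02.le
  have h2 : 0 < w s₀ := mul_pos (by simp only [hh]; linarith) (Real.exp_pos _)
  have h3 : w s₂ ≤ 0 := mul_nonpos_of_nonpos_of_nonneg hs₂h (Real.exp_pos _).le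
  linarith

lemma antitoneOn_Ici_of_deriv {f : ℝ → ℝ} (hf : Differentiable ℝ f) {a : ℝ}
    (h : ∀ x ∈ Set.Ioi a, deriv f x ≤ 0) : AntitoneOn f (Set.Ici a) :=
  antitoneOn_of_deriv_nonpos (convex_Ici _) hf.continuous.continuousOn
    hf.differentiableOn (by rwa [interior_Ici])

lemma monotoneOn_Ici_of_deriv {f : ℝ → ℝ} (hf : Differentiable ℝ f) {a : ℝ}
    (h : ∀ x ∈ Set.Ioi a, 0 ≤ deriv f x) : MonotoneOn f (Set.Ici a) :=
  monotoneOn_of_deriv_nonneg (convex_Ici _) hf.continuous.continuousOn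
    hf.differentiableOn (by rwa [interior_Ici])

lemma exists_neg_of_deriv_le {f : ℝ → ℝ} (hf : Differentiable ℝ f) {c t₁ : ℝ} (hc : 0 < c)
    (hd : ∀ s ∈ Set.Ioi t₁, deriv f s ≤ -c) : ∃ s, t₁ < s ∧ f s < 0 := by
  have hlin : ∀ x : ℝ, HasDerivAt (fun s : ℝ => c * s) c x := fun x => by
    simpa using (hasDerivAt_id x).const_mul c
  have hv : AntitoneOn (fun s => f s + c * s) (Set.Ici t₁) := by
    apply antitoneOn_Ici_of_deriv (fun x => ((hf x).hasDerivAt.add (hlin x)).differentiableAt)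
    intro x hx
    have hD : deriv (fun s => f s + c * s) x = deriv f x + c :=
      ((hf x).hasDerivAt.add (hlin x)).deriv
    show deriv (fun s => f s + c * s) x ≤ 0
    rw [hD]; linarith [hd x hx]
  set s := t₁ + (|f t₁| + 1)/c with hs
  have hst : t₁ < s := by
    have : 0 < (|f t₁| + 1)/c := by positivity
    rw [hs]; linarith
  refine ⟨s, hst, ?_⟩
  have hvv := hv (Set.mem_Ici.mpr le_rfl) (Set.mem_Ici.mpr hst.le) hst.le
  simp only at hvv
  have hcs : c * s = c * t₁ + (|f t₁| + 1) := by
    rw [hs]; field_simp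
  have habs := le_abs_self (f t₁)
  linarith

lemma jacobi_energy (κ lam : ℝ) (φ : ℝ → ℝ) (hφ : Differentiable ℝ φ)
    (hφ' : Differentiable ℝ (deriv φ))
    (hode : ∀ s, deriv (deriv φ) s = -κ * φ s) (hφ0 : φ 0 = 1) (hφ0' : deriv φ 0 = -lam) :
    ∀ s, (deriv φ s)^2 + κ * (φ s)^2 = lam^2 + κ := by
  have hEd : ∀ s, HasDerivAt (fun s => (deriv φ s)^2 + κ * (φ s)^2) 0 s := by
    intro s
    have h1 : HasDerivAt (fun s => (deriv φ s)^2) (2 * deriv φ s * deriv (deriv φ) s) s := by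
      have := ((hφ' s).hasDerivAt).pow 2
      simp at this
      exact this
    have h2 : HasDerivAt (fun s => κ * (φ s)^2) (κ * (2 * φ s * deriv φ s)) s := by
      have := (((hφ s).hasDerivAt).pow 2).const_mul κ
      simpa [mul_assoc, mul_comm, mul_left_comm] using this
    have h3 := h1.add h2
    refine h3.congr_deriv ?_
    rw [hode]; ring
  have hdiff : Differentiable ℝ (fun s => (deriv φ s)^2 + κ * (φ s)^2) :=
    fun s => (hEd s).differentiableAt
  have hconst := is_const_of_deriv_eq_zero hdiff (fun x => (hEd x).deriv)
  intro s
  have h := hconst s 0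
  rw [h, hφ0, hφ0']; ring

lemma jacobi_exists_zero (κ lam : ℝ)
    (hball : 0 < κ ∨ (κ = 0 ∧ 0 < lam) ∨ (κ < 0 ∧ Real.sqrt |κ| < lam))
    (φ : ℝ → ℝ) (hφ : Differentiable ℝ φ) (hφ' : Differentiable ℝ (deriv φ))
    (hode : ∀ s, deriv (deriv φ) s = -κ * φ s) (hφ0 : φ 0 = 1) (hφ0' : deriv φ 0 = -lam) :
    ∃ t, 0 < t ∧ φ t = 0 := by
  by_contra hno
  push_neg at hno
  have hpos : ∀ t, 0 ≤ t → 0 < φ t := by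
    intro t ht
    rcases eq_or_lt_of_le ht with h | h
    · rw [← h, hφ0]; norm_num
    by_contra hle
    push_neg at hle
    have hmem : (0:ℝ) ∈ Set.Icc (φ t) (φ 0) := ⟨hle, by rw [hφ0]; norm_num⟩
    obtain ⟨u, hu, hu0⟩ := intermediate_value_Icc' h.le hφ.continuous.continuousOn hmem
    have hune : u ≠ 0 := by intro h0; rw [h0, hφ0] at hu0; norm_num at hu0
    exact hno u (lt_of_le_of_ne hu.1 (Ne.symm hune)) hu0
  rcases hball with hk | ⟨hk0, hl⟩ | ⟨hkneg, hl⟩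
  · -- κ > 0
    have hφ'anti : AntitoneOn (deriv φ) (Set.Ici 0) := by
      apply antitoneOn_Ici_of_deriv hφ'
      intro x hx
      rw [hode]
      have := hpos x (le_of_lt hx)
      nlinarith
    have hneg1 : ∃ t₁, 0 ≤ t₁ ∧ deriv φ t₁ < 0 := by
      by_contra hcc
      push_neg at hcc
      have hmono : MonotoneOn φ (Set.Ici 0) :=
        monotoneOn_Ici_of_deriv hφ (fun x hx => hcc x (le_of_lt hx))
      have hge1 : ∀ x ∈ Set.Ioi (0:ℝ), 1 ≤ φ x := by
        intro x hx
        have := hmono (Set.mem_Ici.mpr le_rfl) (Set.mem_Ici.mpr hx.le) hx.le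
        rwa [hφ0] at this
      have hlin : ∀ x : ℝ, HasDerivAt (fun s : ℝ => κ * s) κ x := fun x => by
        simpa using (hasDerivAt_id x).const_mul κ
      have hu : AntitoneOn (fun s => deriv φ s + κ * s) (Set.Ici 0) := by
        apply antitoneOn_Ici_of_deriv
          (fun x => ((hφ' x).hasDerivAt.add (hlin x)).differentiableAt)
        intro x hx
        have hD : deriv (fun s => deriv φ s + κ * s) x = deriv (deriv φ) x + κ :=
          ((hφ' x).hasDerivAt.add (hlin x)).deriv
        show deriv (fun s => deriv φ s + κ * s) x ≤ 0
        rw [hD, hode]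
        have := hge1 x hx
        nlinarith
      set s := (1 + |lam|)/κ with hsdef
      have hs0 : 0 ≤ s := by positivity
      have huu := hu (Set.mem_Ici.mpr le_rfl) (Set.mem_Ici.mpr hs0) hs0
      simp only [hφ0', mul_zero, add_zero] at huu
      have hκs : κ * s = 1 + |lam| := by rw [hsdef]; field_simp
      have habs := neg_abs_le lam
      have := hcc s hs0
      linarith
    obtain ⟨t₁, ht₁, hd1⟩ := hneg1
    have hcpos : 0 < -(deriv φ t₁) := by linarith
    obtain ⟨s, hs, hneg⟩ := exists_neg_of_deriv_le hφ hcpos (fun s hs => by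
      have := hφ'anti (Set.mem_Ici.mpr ht₁) (Set.mem_Ici.mpr (le_trans ht₁ (le_of_lt hs)))
        (le_of_lt hs)
      linarith)
    exact absurd (hpos s (le_trans ht₁ hs.le)) (not_lt.mpr hneg.le)
  · -- κ = 0
    have hd2 : ∀ s, deriv (deriv φ) s = 0 := by intro s; rw [hode, hk0]; ring
    have hc1 : ∀ s, deriv φ s = -lam := by
      intro s
      have := is_const_of_deriv_eq_zero hφ' hd2 s 0
      rw [this, hφ0']
    have hlin : ∀ s, φ s = 1 - lam * s := by
      intro s
      have hlin : ∀ x : ℝ, HasDerivAt (fun s : ℝ => lam * s) lam x := fun x => by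
        simpa using (hasDerivAt_id x).const_mul lam
      have hψ : Differentiable ℝ (fun s => φ s + lam * s) :=
        fun x => ((hφ x).hasDerivAt.add (hlin x)).differentiableAt
      have hψ' : ∀ x, deriv (fun s => φ s + lam * s) x = 0 := by
        intro x
        have := ((hφ x).hasDerivAt.add (hlin x)).deriv
        show deriv (φ + fun s => lam * s) x = 0
        rw [this, hc1]; ring
      have h := is_const_of_deriv_eq_zero hψ hψ' s 0
      simp only [hφ0, mul_zero, add_zero] at h
      linarith
    have : φ (1/lam) = 0 := by rw [hlin]; field_simp; norm_num
    exact hno (1/lam) (by positivity) this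
  · -- κ < 0
    have hl0 : 0 < lam := lt_of_le_of_lt (Real.sqrt_nonneg _) hl
    have hlk : 0 < lam^2 + κ := by
      have h1 : Real.sqrt |κ| ^ 2 = |κ| := Real.sq_sqrt (abs_nonneg κ)
      have h2 : |κ| = -κ := abs_of_neg hkneg
      nlinarith [Real.sqrt_nonneg |κ|]
    have hE := jacobi_energy κ lam φ hφ hφ' hode hφ0 hφ0'
    have hκφ : ∀ s, κ * (φ s)^2 ≤ 0 :=
      fun s => mul_nonpos_of_nonpos_of_nonneg hkneg.le (sq_nonneg _)
    have hd'ne : ∀ s, deriv φ s ≠ 0 := by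
      intro s h0
      have h1 := hE s
      rw [h0] at h1
      have := hκφ s
      nlinarith
    have hd'neg : ∀ s, deriv φ s < 0 := by
      intro s
      rcases lt_or_gt_of_ne (hd'ne s) with h | h
      · exact h
      exfalso
      have hcont : Continuous (deriv φ) := hφ'.continuous
      rcases le_or_gt 0 s with hs | hs
      · have hmem : (0:ℝ) ∈ Set.Icc (deriv φ 0) (deriv φ s) := ⟨by rw [hφ0']; linarith, h.le⟩
        obtain ⟨u, _, hu0⟩ := intermediate_value_Icc hs hcont.continuousOn hmem
        exact hd'ne u hu0
      · have hmem : (0:ℝ) ∈ Set.Icc (deriv φ 0) (deriv φ s) := ⟨by rw [hφ0']; linarith, h.le⟩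
        obtain ⟨u, _, hu0⟩ := intermediate_value_Icc' hs.le hcont.continuousOn hmem
        exact hd'ne u hu0
    have hc : 0 < Real.sqrt (lam^2+κ) := Real.sqrt_pos.mpr hlk
    have hsq : Real.sqrt (lam^2+κ)^2 = lam^2+κ := Real.sq_sqrt hlk.le
    obtain ⟨s, hs, hneg⟩ := exists_neg_of_deriv_le hφ hc (t₁ := 0) (fun s _ => by
      have h1 := hE s
      have h2 := hκφ s
      have h3 := hd'neg s
      nlinarith)
    exact absurd (hpos s hs.le) (not_lt.mpr hneg.le)


/-- Under the ball-condition, a solution of the Riccati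
differential inequality `F' ≥ (n-1)κ + F²/(n-1)` on `(0, S)` with
`liminf_{s→0⁺} F(s) ≥ (n-1)λ` cannot exist beyond the least positive zero
`C_{κ,λ}` of the Jacobi solution: `S ≤ C_{κ,λ}`. -/
theorem riccati_blowup_bound (n : ℕ) (hn : 2 ≤ n) (κ lam : ℝ)
    (hball : 0 < κ ∨ (κ = 0 ∧ 0 < lam) ∨ (κ < 0 ∧ Real.sqrt |κ| < lam))
    (φ : ℝ → ℝ)
    (hφ : Differentiable ℝ φ) (hφ' : Differentiable ℝ (deriv φ))
    (hode : ∀ s : ℝ, deriv (deriv φ) s = -κ * φ s)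
    (hφ0 : φ 0 = 1) (hφ0' : deriv φ 0 = -lam)
    (C : ℝ) (hC : C = sInf {t : ℝ | 0 < t ∧ φ t = 0})
    (S : ℝ) (hS : 0 < S) (F : ℝ → ℝ)
    (hF : ∀ s ∈ Set.Ioo (0 : ℝ) S, DifferentiableAt ℝ F s)
    (hF' : ∀ s ∈ Set.Ioo (0 : ℝ) S,
      ((n : ℝ) - 1) * κ + (F s) ^ 2 / ((n : ℝ) - 1) ≤ deriv F s)
    (hliminf : ∀ ε : ℝ, 0 < ε →
      ∀ᶠ s in nhdsWithin (0 : ℝ) (Set.Ioi 0), ((n : ℝ) - 1) * lam - ε ≤ F s) :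
    S ≤ C := by
  by_contra hSC
  push_neg at hSC
  set m : ℝ := (n:ℝ) - 1 with hm
  have hm1 : 1 ≤ m := by
    have h2 : (2:ℝ) ≤ (n:ℝ) := by exact_mod_cast hn
    rw [hm]; linarith
  have hm0 : 0 < m := by linarith
  have hE := jacobi_energy κ lam φ hφ hφ' hode hφ0 hφ0'
  have hlk : 0 < lam^2 + κ := by
    rcases hball with h | ⟨h0, hl⟩ | ⟨hneg, hl⟩
    · nlinarith [sq_nonneg lam]
    · rw [h0]; nlinarith
    · have h1 : Real.sqrt |κ| ^ 2 = |κ| := Real.sq_sqrt (abs_nonneg κ)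
      have h2 : |κ| = -κ := abs_of_neg hneg
      nlinarith [Real.sqrt_nonneg |κ|]
  -- the zero set and basic properties of C
  have hZne : {t : ℝ | 0 < t ∧ φ t = 0}.Nonempty :=
    jacobi_exists_zero κ lam hball φ hφ hφ' hode hφ0 hφ0'
  have hZbdd : BddBelow {t : ℝ | 0 < t ∧ φ t = 0} := ⟨0, fun t ht => ht.1.le⟩
  have hCcl : C ∈ closure {t : ℝ | 0 < t ∧ φ t = 0} := hC ▸ csInf_mem_closure hZne hZbdd
  have hsub : closure {t : ℝ | 0 < t ∧ φ t = 0} ⊆ {t | φ t = 0} ∩ Set.Ici 0 := by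
    apply closure_minimal
    · intro t ht; exact ⟨ht.2, ht.1.le⟩
    · exact ((isClosed_eq hφ.continuous continuous_const).inter isClosed_Ici)
  have hφC : φ C = 0 := (hsub hCcl).1
  have hC0 : (0:ℝ) ≤ C := (hsub hCcl).2
  have hCpos : 0 < C := by
    rcases eq_or_lt_of_le hC0 with h | h
    · exfalso; rw [← h, hφ0] at hφC; norm_num at hφC
    · exact h
  have hposIco : ∀ t ∈ Set.Ico (0:ℝ) C, 0 < φ t := by
    intro t ht
    by_contra hle
    push_neg at hle
    have hmem : (0:ℝ) ∈ Set.Icc (φ t) (φ 0) := ⟨hle, by rw [hφ0]; norm_num⟩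
    obtain ⟨u, hu, hu0⟩ := intermediate_value_Icc' ht.1 hφ.continuous.continuousOn hmem
    have hu0' : 0 < u :=
      lt_of_le_of_ne hu.1 (by intro h; rw [← h, hφ0] at hu0; norm_num at hu0)
    have hCu : C ≤ u := hC ▸ csInf_le hZbdd ⟨hu0', hu0⟩
    linarith [hu.2, ht.2]
  -- derivative of φ at C is negative
  have hdCsq : (deriv φ C)^2 = lam^2 + κ := by
    have h := hE C
    rw [hφC] at h
    nlinarith
  have hdCneg : deriv φ C < 0 := by
    have hne : deriv φ C ≠ 0 := by intro h; rw [h] at hdCsq; nlinarith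
    rcases lt_or_gt_of_ne hne with h | h
    · exact h
    exfalso
    have hslope : Tendsto (slope φ C) (𝓝[<] C) (𝓝 (deriv φ C)) :=
      (hasDerivAt_iff_tendsto_slope.mp (hφ C).hasDerivAt).mono_left
        (nhdsWithin_mono _ (fun x hx => ne_of_lt hx))
    have hev : ∀ᶠ t in 𝓝[<] C, slope φ C t ≤ 0 := by
      have h1 : Set.Ioo (0:ℝ) C ∈ 𝓝[<] C := Ioo_mem_nhdsLT_of_mem ⟨hCpos, le_refl C⟩
      filter_upwards [h1] with t ht
      rw [slope_def_field, hφC]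
      have hnum : 0 ≤ φ t - 0 := by have := hposIco t ⟨ht.1.le, ht.2⟩; linarith
      have hden : t - C ≤ 0 := by linarith [ht.2]
      exact div_nonpos_of_nonneg_of_nonpos hnum hden
    linarith [le_of_tendsto hslope hev]
  -- φ positive slightly to the left of 0
  have hev0 : ∀ᶠ x in 𝓝 (0:ℝ), 0 < φ x := by
    have hca : ContinuousAt φ 0 := hφ.continuous.continuousAt
    have := continuousAt_const.eventually_lt hca (by rw [hφ0]; norm_num : (0:ℝ) < φ 0)
    exact this
  obtain ⟨ε₀, hε₀, hball0⟩ := Metric.eventually_nhds_iff.mp hev0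
  have hφposx : ∀ x : ℝ, -ε₀ < x → x < C → 0 < φ x := by
    intro x h1 h2
    rcases lt_or_ge x 0 with h | h
    · apply hball0
      rw [Real.dist_eq, sub_zero, abs_of_neg h]
      linarith
    · exact hposIco x ⟨h, h2⟩
  -- the comparison function g
  set gf : ℝ → ℝ := fun t => -deriv φ t / φ t with hgf
  have hgd : ∀ t : ℝ, φ t ≠ 0 → HasDerivAt gf (κ + (gf t)^2) t := by
    intro t hne
    have h1 : HasDerivAt (fun t => -deriv φ t) (-(deriv (deriv φ) t)) t := ((hφ' t).hasDerivAt).neg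
    have h3 := h1.div (hφ t).hasDerivAt hne
    refine h3.congr_deriv ?_
    rw [hode, hgf]
    simp only
    field_simp
    ring
  have hgf0 : gf 0 = lam := by rw [hgf]; simp [hφ0, hφ0']
  -- find small a > 0 with gf (-a) < lam
  have hg0d : HasDerivAt gf (κ + lam^2) 0 := by
    have := hgd 0 (by rw [hφ0]; norm_num)
    rwa [hgf0] at this
  have hslg : Tendsto (slope gf 0) (𝓝[<] (0:ℝ)) (𝓝 (κ + lam^2)) :=
    (hasDerivAt_iff_tendsto_slope.mp hg0d).mono_left
      (nhdsWithin_mono _ (fun x hx => ne_of_lt hx))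
  have hevg : ∀ᶠ t in 𝓝[<] (0:ℝ), 0 < slope gf 0 t :=
    hslg.eventually (eventually_gt_nhds (by nlinarith : (0:ℝ) < κ + lam^2))
  have haux : ∀ᶠ t in 𝓝[<] (0:ℝ), gf t < lam ∧ -ε₀ < t ∧ -(S - C) < t ∧ t < 0 := by
    have h1 : Set.Ioo (-(min ε₀ (S - C))) (0:ℝ) ∈ 𝓝[<] (0:ℝ) :=
      Ioo_mem_nhdsLT_of_mem
        ⟨by have := lt_min hε₀ (show (0:ℝ) < S - C by linarith); linarith, le_refl _⟩
    filter_upwards [hevg, h1] with t ht h2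
    have htneg : t < 0 := h2.2
    rw [slope_def_field, hgf0, sub_zero] at ht
    have hnum : gf t - lam < 0 := by
      rcases div_pos_iff.mp ht with ⟨h3, h4⟩ | ⟨h3, h4⟩
      · linarith
      · linarith
    refine ⟨by linarith, ?_, ?_, htneg⟩
    · calc -ε₀ ≤ -(min ε₀ (S - C)) := neg_le_neg (min_le_left _ _)
        _ < t := h2.1
    · calc -(S - C) ≤ -(min ε₀ (S - C)) := neg_le_neg (min_le_right _ _)
        _ < t := h2.1
  obtain ⟨t0, ht0⟩ := haux.exists
  set a : ℝ := -t0 with ha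
  have ha0 : 0 < a := by rw [ha]; linarith [ht0.2.2.2]
  have haε : a < ε₀ := by rw [ha]; linarith [ht0.2.1]
  have haSC : a < S - C := by rw [ha]; linarith [ht0.2.2.1]
  have hglam : gf (-a) < lam := by rw [ha, neg_neg]; exact ht0.1
  set T : ℝ := C + a with hT
  have hT0 : 0 < T := by rw [hT]; linarith
  have hTS : T < S := by rw [hT]; linarith
  -- the domain facts for G
  have hdom : ∀ s : ℝ, 0 < s → s < T → φ (s - a) ≠ 0 := by
    intro s h1 h2
    have : 0 < φ (s - a) := hφposx _ (by linarith) (by rw [hT] at h2; linarith)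
    linarith
  set G : ℝ → ℝ := fun s => m * gf (s - a) with hG
  have hGd : ∀ s : ℝ, 0 < s → s < T → HasDerivAt G (m * (κ + (gf (s - a))^2)) s := by
    intro s h1 h2
    have hinner : HasDerivAt (fun s : ℝ => gf (s - a)) (κ + (gf (s - a))^2) s := by
      have := (hgd (s - a) (hdom s h1 h2)).comp s ((hasDerivAt_id s).sub_const a)
      exact this.congr_deriv (by ring)
    exact hinner.const_mul m
  -- choose a starting point s₀
  set ε : ℝ := m * (lam - gf (-a)) / 3 with hε
  have hεpos : 0 < ε := by rw [hε]; nlinarith [hglam, hm0]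
  have hGcont : ContinuousAt (fun s : ℝ => m * gf (s - a)) 0 := by
    have h0 : φ ((0:ℝ) - a) ≠ 0 := by
      have : 0 < φ (-a) := hφposx _ (by linarith) (by linarith)
      simp only [zero_sub]; linarith
    have hg' : ContinuousAt (fun s : ℝ => gf (s - a)) 0 :=
      ((hgd (0 - a) h0).comp_sub_const 0 a).differentiableAt.continuousAt
    exact continuousAt_const.mul hg'
  have hGsmall : ∀ᶠ s in 𝓝[>] (0:ℝ), m * gf (s - a) < m * gf (-a) + ε := by
    have hlt : (fun s : ℝ => m * gf (s - a)) 0 < m * gf (-a) + ε := by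
      simp only [zero_sub]
      linarith
    have := hGcont.eventually_lt continuousAt_const hlt
    exact this.filter_mono nhdsWithin_le_nhds
  have hmemIoo : ∀ᶠ s in 𝓝[>] (0:ℝ), s ∈ Set.Ioo (0:ℝ) (min S T) :=
    Ioo_mem_nhdsGT_of_mem ⟨le_refl _, lt_min hS hT0⟩
  have hFtotal := (hliminf ε hεpos).and (hGsmall.and hmemIoo)
  obtain ⟨s₀, hs₀F, hs₀G, hs₀mem⟩ := hFtotal.exists
  have hs₀pos : 0 < s₀ := hs₀mem.1
  have hs₀T : s₀ < T := lt_of_lt_of_le hs₀mem.2 (min_le_right _ _)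
  have hs₀S : s₀ < S := lt_of_lt_of_le hs₀mem.2 (min_le_left _ _)
  have hstart : G s₀ < F s₀ := by
    have h1 : m * lam = m * gf (-a) + 3 * ε := by rw [hε]; ring
    rw [hG]
    simp only
    calc m * gf (s₀ - a) < m * gf (-a) + ε := hs₀G
      _ ≤ m * lam - 2*ε := by rw [h1]; linarith
      _ < m * lam - ε := by linarith
      _ ≤ F s₀ := hs₀F
  -- blow-up of G at T
  have hblow : Tendsto G (𝓝[<] T) atTop := by
    have h1 : Tendsto (fun x => -deriv φ x) (𝓝[<] C) (𝓝 (-deriv φ C)) :=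
      ((hφ'.continuous.neg).tendsto C).mono_left nhdsWithin_le_nhds
    have h2 : Tendsto φ (𝓝[<] C) (𝓝[>] (0:ℝ)) := by
      apply tendsto_nhdsWithin_of_tendsto_nhds_of_eventually_within
      · have := (hφ.continuous.tendsto C).mono_left (nhdsWithin_le_nhds (s := Set.Iio C))
        rwa [hφC] at this
      · filter_upwards [Ioo_mem_nhdsLT_of_mem (⟨hCpos, le_refl C⟩ : C ∈ Set.Ioc 0 C)] with
          x hx
        exact hposIco x ⟨hx.1.le, hx.2⟩
    have h3 : Tendsto (fun x => (φ x)⁻¹) (𝓝[<] C) atTop := tendsto_inv_nhdsGT_zero.comp h2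
    have h4 : Tendsto (fun x => -deriv φ x * (φ x)⁻¹) (𝓝[<] C) atTop :=
      Tendsto.pos_mul_atTop (by linarith : (0:ℝ) < -deriv φ C) h1 h3
    have h5 : Tendsto gf (𝓝[<] C) atTop := by
      apply h4.congr
      intro x
      exact (div_eq_mul_inv (-deriv φ x) (φ x)).symm
    have h6 : Tendsto (fun x => m * gf x) (𝓝[<] C) atTop := h5.const_mul_atTop hm0
    have h7 : Tendsto (fun s : ℝ => s - a) (𝓝[<] T) (𝓝[<] C) := by
      apply tendsto_nhdsWithin_of_tendsto_nhds_of_eventually_within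
      · have : Tendsto (fun s : ℝ => s - a) (𝓝 T) (𝓝 (T - a)) :=
          (continuous_id.sub continuous_const).tendsto T
        have hTa : T - a = C := by rw [hT]; ring
        rw [hTa] at this
        exact this.mono_left nhdsWithin_le_nhds
      · filter_upwards [self_mem_nhdsWithin] with x hx
        have : x < T := hx
        simp only [Set.mem_Iio]
        rw [hT] at this
        linarith
    exact h6.comp h7
  -- pick s₁ near T
  have hFT : ContinuousAt F T := (hF T ⟨hT0, hTS⟩).continuousAt
  have hev1 : ∀ᶠ s in 𝓝[<] T, F s < F T + 1 := by
    have := hFT.eventually_lt continuousAt_const (by linarith : F T < F T + 1)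
    exact this.filter_mono nhdsWithin_le_nhds
  have hev2 : ∀ᶠ s in 𝓝[<] T, F T + 1 < G s := hblow.eventually_gt_atTop (F T + 1)
  have hev3 : ∀ᶠ s in 𝓝[<] T, s ∈ Set.Ioo s₀ T :=
    Ioo_mem_nhdsLT_of_mem ⟨hs₀T, le_refl _⟩
  obtain ⟨s₁, h1F, h1G, h1mem⟩ := (hev1.and (hev2.and hev3)).exists
  -- apply the comparison lemma on [s₀, s₁]
  have hIccsub : ∀ s ∈ Set.Icc s₀ s₁, s ∈ Set.Ioo (0:ℝ) S := by
    intro s hs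
    exact ⟨lt_of_lt_of_le hs₀pos hs.1, by linarith [hs.2, h1mem.2, hTS]⟩
  have hkey : G s₁ < F s₁ := by
    apply riccati_compare (m := m) (c := m * κ) h1mem.1.le
    · intro s hs; exact hF s (hIccsub s hs)
    · intro s hs
      exact (hGd s (lt_of_lt_of_le hs₀pos hs.1) (lt_of_le_of_lt hs.2 h1mem.2)).differentiableAt
    · intro s hs
      exact hF' s (hIccsub s hs)
    · intro s hs
      have hd := hGd s (lt_of_lt_of_le hs₀pos hs.1) (lt_of_le_of_lt hs.2 h1mem.2)
      rw [hd.deriv]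
      rw [hG]
      simp only
      field_simp
    · exact hstart
  linarith
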